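/- Let A be an n×n symmetric quasi-Cartan matrix and let s ≠ r be indices. Then T_{s,r}(T_{s,r}A) = A; that is, applying the transformation T_{s,r} twice in succession returns the original matrix. -/

import Mathlib

open Matrix

/-- `M_{s,r}^σ = I + σ·e_s·e_rᵀ`. -/
def Msr {V : Type*} [Fintype V] [DecidableEq V] (σ : ℤ) (s r : V) : Matrix V V ℤ :=
  1 + Matrix.single s r σ

/-- `T_{s,r} A = (M_{s,r}^{-A_{s,r}})ᵀ · A · M_{s,r}^{-A_{s,r}}`. -/
def Tsr {V : Type*} [Fintype V] [DecidableEq V] (s r : V) (A : Matrix V V ℤ) : Matrix V V ℤ :=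
  (Msr (-(A s r)) s r)ᵀ * A * Msr (-(A s r)) s r

lemma Msr_mul {V : Type*} [Fintype V] [DecidableEq V] (σ τ : ℤ) (s r : V) (h : s ≠ r) :
    Msr σ s r * Msr τ s r = Msr (σ + τ) s r := by
  simp [Msr, add_mul, mul_add, Matrix.single_mul_single_of_ne (c := σ) s r s (Ne.symm h) τ,
    Matrix.single_add, add_assoc]

lemma stdBasis_transpose {V : Type*} [DecidableEq V] (s r : V) (c : ℤ) :
    (Matrix.single s r c)ᵀ = Matrix.single r s c := by
  ext i j; simp [Matrix.single, Matrix.transpose_apply, and_comm]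

lemma Tsr_apply_sr (n : ℕ) (A : Matrix (Fin n) (Fin n) ℤ)
    (hdiag : ∀ i, A i i = 2) (s r : Fin n) (hsr : s ≠ r) :
    (Tsr s r A) s r = -(A s r) := by
  simp [Tsr, Msr, transpose_add, add_mul, mul_add, hsr, hdiag,
    stdBasis_transpose,
    Matrix.single_mul_apply_of_ne (h := hsr),
    Matrix.single_apply_of_row_ne (Ne.symm hsr)]
  ring

theorem stmt3 (n : ℕ) (A : Matrix (Fin n) (Fin n) ℤ)
    (hsym : A.IsSymm) (hdiag : ∀ i, A i i = 2)
    (s r : Fin n) (hsr : s ≠ r) :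
    Tsr s r (Tsr s r A) = A := by
  have h1 : (Tsr s r A) s r = -(A s r) := Tsr_apply_sr n A hdiag s r hsr
  have key : ∀ σ : ℤ, (Msr σ s r)ᵀ * (Msr (-σ) s r)ᵀ = 1 := by
    intro σ
    rw [← transpose_mul, Msr_mul _ _ _ _ hsr]
    simp [Msr]
  conv_lhs => rw [Tsr, h1, neg_neg, Tsr]
  simp only [mul_assoc]
  rw [Msr_mul _ _ _ _ hsr]
  simp only [neg_add_cancel]
  have h0 : Msr 0 s r = (1 : Matrix (Fin n) (Fin n) ℤ) := by simp [Msr]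
  rw [h0, mul_one, ← mul_assoc, key]
  simp
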